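/- (Wittwer's sharp square function bound.) There is an absolute constant C > 0 such that for every weight w ∈ A₂^d and every dyadic interval J, (1/|J|) Σ_{I∈D(J)} ((m_{I⁻}w − m_{I⁺}w)/(2 m_I w))² · |I| · m_I w ≤ C · ‖w‖_{A₂^d} · m_J w. -/

import Mathlib

open MeasureTheory Set

noncomputable section

/-- The dyadic interval `[k 2^{-j}, (k+1) 2^{-j})`, indexed by `I = (j, k)`. -/
def dyadicI (I : ℤ × ℤ) : Set ℝ :=
  Set.Ico ((I.2 : ℝ) * 2 ^ (-I.1)) (((I.2 : ℝ) + 1) * 2 ^ (-I.1))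

/-- The length `|I| = 2^{-j}` of the dyadic interval indexed by `I = (j, k)`. -/
def len (I : ℤ × ℤ) : ℝ := 2 ^ (-I.1)

/-- The left half `I⁺` of the dyadic interval `I`. -/
def leftHalf (I : ℤ × ℤ) : ℤ × ℤ := (I.1 + 1, 2 * I.2)

/-- The right half `I⁻` of the dyadic interval `I`. -/
def rightHalf (I : ℤ × ℤ) : ℤ × ℤ := (I.1 + 1, 2 * I.2 + 1)

/-- The average `m_I f = (1/|I|) ∫_I f`. -/
def avg (f : ℝ → ℝ) (I : ℤ × ℤ) : ℝ := (len I)⁻¹ * ∫ x in dyadicI I, f x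

/-- The Haar function `h_I = |I|^{-1/2} (χ_{I⁺} - χ_{I⁻})`. -/
def haar (I : ℤ × ℤ) (x : ℝ) : ℝ :=
  (Real.sqrt (len I))⁻¹ *
    ((dyadicI (leftHalf I)).indicator (fun _ => (1 : ℝ)) x -
      (dyadicI (rightHalf I)).indicator (fun _ => (1 : ℝ)) x)

/-- The Haar coefficient `b_I = ⟨b, h_I⟩`. -/
def haarCoef (b : ℝ → ℝ) (I : ℤ × ℤ) : ℝ := ∫ x, b x * haar I x

/-- The dyadic BMO norm of `b`. -/
def bmoNorm (b : ℝ → ℝ) : ℝ :=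
  Real.sqrt (⨆ I : ℤ × ℤ, (len I)⁻¹ * ∫ x in dyadicI I, (b x - avg b I) ^ 2)

/-- The `A₂^d` characteristic `‖w‖_{A₂^d} = sup_I (m_I w)(m_I w⁻¹)`. -/
def A2const (w : ℝ → ℝ) : ℝ :=
  ⨆ I : ℤ × ℤ, avg w I * avg (fun x => (w x)⁻¹) I

namespace WittwerAux
open MeasureTheory


/-- Bellman function. -/
def bell (Q u v : ℝ) : ℝ := 3*u - 3*v⁻¹ + (2/Real.sqrt Q) * (Real.sqrt u / Real.sqrt v)

/-- polynomial core of the Hessian estimate -/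
lemma poly_core (q p r x y : ℝ) (hq : 0 < q) (hp : 0 < p) (hr : 0 < r) (h : p*r ≤ 2*q) :
    0 ≤ 24*q^2*p^3*y^2 + 2*q*x^2*r^5 + 4*q*x*y*p^2*r^3 - 6*q*y^2*p^4*r - x^2*p*r^6/2 := by
  have hqr : (0:ℝ) < q * r^5 := by positivity
  have h1 := sq_nonneg (q*r^5*x + 2*q*p^2*r^3*y)
  have h2 : 0 ≤ 4*q^2*p^3*r^5*((3*q - p*r)*y^2) := by
    have : 0 ≤ 3*q - p*r := by linarith
    positivity
  have h3 : 0 ≤ q*r^10*((q - p*r/2)*x^2) := by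
    have : 0 ≤ q - p*r/2 := by linarith
    positivity
  have h4 : 0 ≤ 6*q^2*p^3*r^5*((2*q - p*r)*y^2) := by
    have : 0 ≤ 2*q - p*r := by linarith
    positivity
  have key : 0 ≤ (24*q^2*p^3*y^2 + 2*q*x^2*r^5 + 4*q*x*y*p^2*r^3 - 6*q*y^2*p^4*r - x^2*p*r^6/2) * (q*r^5) := by
    nlinarith [h1, h2, h3, h4]
  exact nonneg_of_mul_nonneg_right (by linarith [key]) hqr

/-- Hessian estimate in sqrt variables. -/
lemma hess_sqrt (q p r x y : ℝ) (hq : 1 ≤ q) (hp : 0 < p) (hr : 0 < r) (h : p*r ≤ 2*q) :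
    -6*y^2/(r^2)^3 + (2/q) * (-(x^2)/(4*(p^2*p)*r) - x*y/(2*p*(r^2*r)) + 3*y^2*p/(4*(r^2)^2*r))
      ≤ -(x^2/(8*(q^2)*(p^2))) := by
  have hq0 : (0:ℝ) < q := lt_of_lt_of_le one_pos hq
  have hM : (0:ℝ) < 4*q^2*p^3*r^6 := by positivity
  rw [← sub_nonneg]
  have heq : -(x^2/(8*(q^2)*(p^2))) - (-6*y^2/(r^2)^3 + (2/q) * (-(x^2)/(4*(p^2*p)*r) - x*y/(2*p*(r^2*r)) + 3*y^2*p/(4*(r^2)^2*r)))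
      = (24*q^2*p^3*y^2 + 2*q*x^2*r^5 + 4*q*x*y*p^2*r^3 - 6*q*y^2*p^4*r - x^2*p*r^6/2) / (4*q^2*p^3*r^6) := by
    field_simp
    ring
  rw [heq]
  exact div_nonneg (poly_core q p r x y hq0 hp hr h) hM.le

variable (Q u v x y : ℝ)

def gg (t : ℝ) : ℝ :=
  3*(u+x*t) - 3*(v+y*t)⁻¹ + (2/Real.sqrt Q) * (Real.sqrt (u+x*t) / Real.sqrt (v+y*t))

def gg1 (t : ℝ) : ℝ :=
  3*x + 3*y/(v+y*t)^2 + (2/Real.sqrt Q) *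
    ( x/(2*Real.sqrt (u+x*t)*Real.sqrt (v+y*t))
      - Real.sqrt (u+x*t)*y/(2*((v+y*t)*Real.sqrt (v+y*t))) )

def gg2 (t : ℝ) : ℝ :=
  -6*y^2/((v+y*t))^3 + (2/Real.sqrt Q) *
    ( -(x^2)/(4*((u+x*t)*Real.sqrt (u+x*t))*Real.sqrt (v+y*t))
      - x*y/(2*Real.sqrt (u+x*t)*((v+y*t)*Real.sqrt (v+y*t)))
      + 3*y^2*Real.sqrt (u+x*t)/(4*((v+y*t))^2*Real.sqrt (v+y*t)) )

lemma hasDerivAt_gg {t : ℝ} (hQ : 0 < Q) (hPt : 0 < u + x*t) (hRt : 0 < v + y*t) :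
    HasDerivAt (gg Q u v x y) (gg1 Q u v x y t) t := by
  have hP : HasDerivAt (fun t : ℝ => u + x*t) x t := by
    simpa using ((hasDerivAt_id t).const_mul x).const_add u
  have hR : HasDerivAt (fun t : ℝ => v + y*t) y t := by
    simpa using ((hasDerivAt_id t).const_mul y).const_add v
  have hsP : HasDerivAt (fun t : ℝ => Real.sqrt (u+x*t)) (x / (2*Real.sqrt (u+x*t))) t :=
    hP.sqrt hPt.ne'
  have hsR : HasDerivAt (fun t : ℝ => Real.sqrt (v+y*t)) (y / (2*Real.sqrt (v+y*t))) t :=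
    hR.sqrt hRt.ne'
  have hrpos : 0 < Real.sqrt (v+y*t) := Real.sqrt_pos.2 hRt
  have hppos : 0 < Real.sqrt (u+x*t) := Real.sqrt_pos.2 hPt
  have hiR : HasDerivAt (fun t : ℝ => (v+y*t)⁻¹) (-y / (v+y*t)^2) t := hR.inv hRt.ne'
  have hdiv := hsP.div hsR hrpos.ne'
  have htot := ((hP.const_mul 3).sub (hiR.const_mul 3)).add (hdiv.const_mul (2/Real.sqrt Q))
  refine htot.congr_deriv ?_
  symm
  rw [gg1]
  set p := Real.sqrt (u+x*t) with hp
  set r := Real.sqrt (v+y*t) with hr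
  have hrr : r^2 = v + y*t := Real.sq_sqrt hRt.le
  have hpp : p^2 = u + x*t := Real.sq_sqrt hPt.le
  simp only [← hrr, ← hpp]
  have hr0 : r ≠ 0 := hrpos.ne'
  have hp0 : p ≠ 0 := hppos.ne'
  have hq0 : Real.sqrt Q ≠ 0 := (Real.sqrt_pos.2 hQ).ne'
  field_simp
  ring

lemma hasDerivAt_gg1 {t : ℝ} (hQ : 0 < Q) (hPt : 0 < u + x*t) (hRt : 0 < v + y*t) :
    HasDerivAt (gg1 Q u v x y) (gg2 Q u v x y t) t := by
  have hP : HasDerivAt (fun t : ℝ => u + x*t) x t := by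
    simpa using ((hasDerivAt_id t).const_mul x).const_add u
  have hR : HasDerivAt (fun t : ℝ => v + y*t) y t := by
    simpa using ((hasDerivAt_id t).const_mul y).const_add v
  have hsP : HasDerivAt (fun t : ℝ => Real.sqrt (u+x*t)) (x / (2*Real.sqrt (u+x*t))) t :=
    hP.sqrt hPt.ne'
  have hsR : HasDerivAt (fun t : ℝ => Real.sqrt (v+y*t)) (y / (2*Real.sqrt (v+y*t))) t :=
    hR.sqrt hRt.ne'
  have hrpos : 0 < Real.sqrt (v+y*t) := Real.sqrt_pos.2 hRt
  have hppos : 0 < Real.sqrt (u+x*t) := Real.sqrt_pos.2 hPt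
  have hsq : HasDerivAt (fun t : ℝ => (v+y*t)^2) (2*(v+y*t)^1*y) t := hR.pow 2
  have hterm2 : HasDerivAt (fun t : ℝ => 3*y*((v+y*t)^2)⁻¹)
      (3*y*(-(2*(v+y*t)^1*y) / ((v+y*t)^2)^2)) t :=
    (hsq.inv (by positivity)).const_mul (3*y)
  have hden1 : HasDerivAt (fun t : ℝ => 2*Real.sqrt (u+x*t)*Real.sqrt (v+y*t))
      ((2*(x / (2*Real.sqrt (u+x*t))))*Real.sqrt (v+y*t)
        + 2*Real.sqrt (u+x*t)*(y / (2*Real.sqrt (v+y*t)))) t := by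
    simpa [mul_assoc, Pi.mul_def] using ((hsP.const_mul 2).mul hsR)
  have hterm3 : HasDerivAt (fun t : ℝ => x/(2*Real.sqrt (u+x*t)*Real.sqrt (v+y*t)))
      ((0*(2*Real.sqrt (u+x*t)*Real.sqrt (v+y*t)) - x*((2*(x / (2*Real.sqrt (u+x*t))))*Real.sqrt (v+y*t)
        + 2*Real.sqrt (u+x*t)*(y / (2*Real.sqrt (v+y*t)))))
        / (2*Real.sqrt (u+x*t)*Real.sqrt (v+y*t))^2) t :=
    (hasDerivAt_const t x).div hden1 (by positivity)
  have hden2 : HasDerivAt (fun t : ℝ => 2*((v+y*t)*Real.sqrt (v+y*t)))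
      (2*(y*Real.sqrt (v+y*t) + (v+y*t)*(y / (2*Real.sqrt (v+y*t))))) t :=
    (hR.mul hsR).const_mul 2
  have hnum2 : HasDerivAt (fun t : ℝ => Real.sqrt (u+x*t)*y)
      ((x / (2*Real.sqrt (u+x*t)))*y) t := hsP.mul_const y
  have hterm4 : HasDerivAt (fun t : ℝ => Real.sqrt (u+x*t)*y/(2*((v+y*t)*Real.sqrt (v+y*t))))
      (((x / (2*Real.sqrt (u+x*t)))*y*(2*((v+y*t)*Real.sqrt (v+y*t)))
        - Real.sqrt (u+x*t)*y*(2*(y*Real.sqrt (v+y*t) + (v+y*t)*(y / (2*Real.sqrt (v+y*t))))))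
        / (2*((v+y*t)*Real.sqrt (v+y*t)))^2) t :=
    hnum2.div hden2 (by positivity)
  have htot := ((hasDerivAt_const t (3*x)).add hterm2).add
    ((hterm3.sub hterm4).const_mul (2/Real.sqrt Q))
  refine htot.congr_deriv ?_
  symm
  rw [gg2]
  set p := Real.sqrt (u+x*t) with hp
  set r := Real.sqrt (v+y*t) with hr
  have hrr : r^2 = v + y*t := Real.sq_sqrt hRt.le
  have hpp : p^2 = u + x*t := Real.sq_sqrt hPt.le
  simp only [← hrr, ← hpp]
  have hr0 : r ≠ 0 := hrpos.ne'
  have hp0 : p ≠ 0 := hppos.ne'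
  have hq0 : Real.sqrt Q ≠ 0 := (Real.sqrt_pos.2 hQ).ne'
  field_simp
  ring


lemma gg2_le {Q u v x y t : ℝ} (hQ : 1 ≤ Q) (hPt : 0 < u + x*t) (hRt : 0 < v + y*t)
    (hPR : (u+x*t)*(v+y*t) ≤ 4*Q) : gg2 Q u v x y t ≤ -(x^2/(8*Q*(u+x*t))) := by
  have hQ0 : (0:ℝ) < Q := by linarith
  have hq1 : 1 ≤ Real.sqrt Q := by
    rw [show (1:ℝ) = Real.sqrt 1 from (Real.sqrt_one).symm]
    exact Real.sqrt_le_sqrt hQ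
  have hppos : 0 < Real.sqrt (u+x*t) := Real.sqrt_pos.2 hPt
  have hrpos : 0 < Real.sqrt (v+y*t) := Real.sqrt_pos.2 hRt
  have hpr : Real.sqrt (u+x*t) * Real.sqrt (v+y*t) ≤ 2 * Real.sqrt Q := by
    rw [← Real.sqrt_mul hPt.le]
    have h4 : (2:ℝ) * Real.sqrt Q = Real.sqrt (4*Q) := by
      rw [show (4:ℝ)*Q = 2^2*Q by ring, Real.sqrt_mul (by positivity), Real.sqrt_sq (by norm_num : (0:ℝ) ≤ 2)]
    rw [h4]
    exact Real.sqrt_le_sqrt hPR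
  have H := hess_sqrt (Real.sqrt Q) (Real.sqrt (u+x*t)) (Real.sqrt (v+y*t)) x y hq1 hppos hrpos hpr
  rw [gg2]
  set qq := Real.sqrt Q with hqdef
  set p := Real.sqrt (u+x*t) with hpdef
  set r := Real.sqrt (v+y*t) with hrdef
  have hqq : qq^2 = Q := Real.sq_sqrt hQ0.le
  have hpp : p^2 = u + x*t := Real.sq_sqrt hPt.le
  have hrr : r^2 = v + y*t := Real.sq_sqrt hRt.le
  simp only [← hqq, ← hpp, ← hrr]
  convert H using 3 <;> ring

lemma lin_pos {a b t : ℝ} (h1 : 0 < a - b) (h2 : 0 < a + b) (ht1 : -1 ≤ t) (ht2 : t ≤ 1) :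
    0 < a + b*t := by
  rcases le_or_gt 0 b with hb | hb
  · nlinarith
  · nlinarith

lemma lin_le {a b t : ℝ} (h1 : 0 < a - b) (h2 : 0 < a + b) (ht1 : -1 ≤ t) (ht2 : t ≤ 1) :
    a + b*t ≤ 2*a := by
  rcases le_or_gt 0 b with hb | hb
  · nlinarith
  · nlinarith

lemma bell_midpoint (hQ : 1 ≤ Q) (hul : 0 < u - x) (hur : 0 < u + x)
    (hvl : 0 < v - y) (hvr : 0 < v + y) (huv : u*v ≤ Q) :
    bell Q (u-x) (v-y)/2 + bell Q (u+x) (v+y)/2 + x^2/(32*Q*u) ≤ bell Q u v := by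
  have hu : 0 < u := by linarith
  have hv : 0 < v := by linarith
  have hQ0 : 0 < Q := by linarith
  set m := x^2/(32*Q*u) with hm
  have hm0 : 0 ≤ m := by positivity
  set q : ℝ → ℝ := fun t => gg Q u v x y t + m*t^2 with hqdef
  -- derivatives at points of Icc
  have hD : ∀ t ∈ Icc (-1:ℝ) 1, HasDerivAt q (gg1 Q u v x y t + 2*m*t) t := by
    intro t ht
    have hPt : 0 < u + x*t := lin_pos hul hur ht.1 ht.2
    have hRt : 0 < v + y*t := lin_pos hvl hvr ht.1 ht.2
    have h2 : HasDerivAt (fun s : ℝ => m*s^2) (2*m*t) t := by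
      have := (hasDerivAt_pow 2 t).const_mul m
      refine this.congr_deriv ?_
      push_cast
      ring
    exact (hasDerivAt_gg Q u v x y hQ0 hPt hRt).add h2
  have hD2 : ∀ t ∈ Icc (-1:ℝ) 1,
      HasDerivAt (fun t => gg1 Q u v x y t + 2*m*t) (gg2 Q u v x y t + 2*m) t := by
    intro t ht
    have hPt : 0 < u + x*t := lin_pos hul hur ht.1 ht.2
    have hRt : 0 < v + y*t := lin_pos hvl hvr ht.1 ht.2
    have h2 : HasDerivAt (fun s : ℝ => 2*m*s) (2*m) t := by
      simpa using (hasDerivAt_id t).const_mul (2*m)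
    exact (hasDerivAt_gg1 Q u v x y hQ0 hPt hRt).add h2
  have hconc : ConcaveOn ℝ (Icc (-1:ℝ) 1) q := by
    apply concaveOn_of_hasDerivWithinAt2_nonpos (convex_Icc _ _)
      (f' := fun t => gg1 Q u v x y t + 2*m*t) (f'' := fun t => gg2 Q u v x y t + 2*m)
    · intro t ht
      exact (hD t ht).continuousAt.continuousWithinAt
    · intro t ht
      exact (hD t (interior_subset ht)).hasDerivWithinAt
    · intro t ht
      exact (hD2 t (interior_subset ht)).hasDerivWithinAt
    · intro t ht
      rw [interior_Icc] at ht
      have ht' : t ∈ Icc (-1:ℝ) 1 := ⟨ht.1.le, ht.2.le⟩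
      have hPt : 0 < u + x*t := lin_pos hul hur ht'.1 ht'.2
      have hRt : 0 < v + y*t := lin_pos hvl hvr ht'.1 ht'.2
      have hPle : u + x*t ≤ 2*u := lin_le hul hur ht'.1 ht'.2
      have hRle : v + y*t ≤ 2*v := lin_le hvl hvr ht'.1 ht'.2
      have hPR : (u+x*t)*(v+y*t) ≤ 4*Q := by nlinarith
      have h1 := gg2_le hQ hPt hRt hPR
      have h2 : x^2/(8*Q*(2*u)) ≤ x^2/(8*Q*(u+x*t)) := by
        apply div_le_div_of_nonneg_left (sq_nonneg x) (by positivity) (by nlinarith)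
      have hmm : 2*m = x^2/(8*Q*(2*u)) := by
        rw [hm]; ring
      linarith
  have hmem1 : (-1:ℝ) ∈ Icc (-1:ℝ) 1 := by norm_num
  have hmem2 : (1:ℝ) ∈ Icc (-1:ℝ) 1 := by norm_num
  have key := hconc.2 hmem1 hmem2 (by norm_num : (0:ℝ) ≤ 1/2) (by norm_num : (0:ℝ) ≤ 1/2)
    (by norm_num : (1/2:ℝ) + 1/2 = 1)
  have e0 : (1/2:ℝ) • (-1:ℝ) + (1/2:ℝ) • (1:ℝ) = 0 := by norm_num
  rw [e0] at key
  have eq0 : q 0 = bell Q u v := by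
    simp only [hqdef, gg, bell]
    norm_num
  have eqm : q (-1) = bell Q (u-x) (v-y) + m := by
    simp only [hqdef, gg, bell]
    rw [show u + x*(-1) = u - x by ring, show v + y*(-1) = v - y by ring]
    ring
  have eqp : q 1 = bell Q (u+x) (v+y) + m := by
    simp only [hqdef, gg, bell]
    rw [show u + x*1 = u + x by ring, show v + y*1 = v + y by ring]
    ring
  rw [eq0, eqm, eqp] at key
  simp only [smul_eq_mul] at key
  linarith

lemma bell_nonneg {Q u v : ℝ} (hQ : 1 ≤ Q) (hu : 0 < u) (hv : 0 < v) (h1 : 1 ≤ u*v) :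
    0 ≤ bell Q u v := by
  have hinv : v⁻¹ ≤ u := by
    rw [inv_eq_one_div, div_le_iff₀ hv]
    linarith
  have h3 : 0 ≤ (2/Real.sqrt Q) * (Real.sqrt u / Real.sqrt v) := by positivity
  rw [bell]
  linarith

lemma bell_le {Q u v : ℝ} (hQ : 1 ≤ Q) (hu : 0 < u) (hv : 0 < v) (h1 : 1 ≤ u*v) :
    bell Q u v ≤ 5*u := by
  have hinv : v⁻¹ ≤ u := by
    rw [inv_eq_one_div, div_le_iff₀ hv]
    linarith
  have hq1 : 1 ≤ Real.sqrt Q := by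
    rw [show (1:ℝ) = Real.sqrt 1 from (Real.sqrt_one).symm]
    exact Real.sqrt_le_sqrt hQ
  have hsr : Real.sqrt u / Real.sqrt v ≤ u := by
    rw [← Real.sqrt_div hu.le v]
    have h2 : u/v ≤ u^2 := by
      rw [div_le_iff₀ hv]
      nlinarith
    calc Real.sqrt (u/v) ≤ Real.sqrt (u^2) := Real.sqrt_le_sqrt h2
      _ = u := Real.sqrt_sq hu.le
  have hc : 2/Real.sqrt Q ≤ 2 := by
    rw [div_le_iff₀ (by linarith : (0:ℝ) < Real.sqrt Q)]
    nlinarith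
  have h4 : (2/Real.sqrt Q) * (Real.sqrt u / Real.sqrt v) ≤ 2 * u := by
    apply mul_le_mul hc hsr (by positivity) (by norm_num)
  have h5 : 0 < v⁻¹ := by positivity
  rw [bell]
  linarith

-- ============ dyadic geometry ============

lemma len_pos (I : ℤ × ℤ) : 0 < len I := by
  rw [len]; positivity

lemma two_zpow_succ (j : ℤ) : (2:ℝ) ^ (-(j+1)) = 2 ^ (-j) / 2 := by
  rw [show -(j+1) = -j + (-1) by ring, zpow_add₀ (by norm_num : (2:ℝ) ≠ 0), zpow_neg_one]
  ring

lemma len_leftHalf (I : ℤ × ℤ) : len (leftHalf I) = len I / 2 := by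
  rw [len, len, leftHalf, two_zpow_succ]

lemma len_rightHalf (I : ℤ × ℤ) : len (rightHalf I) = len I / 2 := by
  rw [len, len, rightHalf, two_zpow_succ]

lemma dyadicI_eq (I : ℤ × ℤ) : dyadicI I = Set.Ico ((I.2 : ℝ) * len I) (((I.2 : ℝ) + 1) * len I) := rfl

lemma left_lo (I : ℤ × ℤ) :
    (((leftHalf I).2 : ℝ)) * 2 ^ (-(leftHalf I).1) = (I.2 : ℝ) * 2 ^ (-I.1) := by
  rw [leftHalf]
  push_cast
  rw [two_zpow_succ]
  ring

lemma left_hi_right_lo (I : ℤ × ℤ) :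
    (((leftHalf I).2 : ℝ) + 1) * 2 ^ (-(leftHalf I).1)
      = (((rightHalf I).2 : ℝ)) * 2 ^ (-(rightHalf I).1) := by
  rw [leftHalf, rightHalf]
  push_cast
  ring

lemma right_hi (I : ℤ × ℤ) :
    (((rightHalf I).2 : ℝ) + 1) * 2 ^ (-(rightHalf I).1) = ((I.2 : ℝ) + 1) * 2 ^ (-I.1) := by
  rw [rightHalf]
  push_cast
  rw [two_zpow_succ]
  ring

lemma lo_le_mid (I : ℤ × ℤ) :
    ((I.2 : ℝ)) * 2 ^ (-I.1) ≤ (((rightHalf I).2 : ℝ)) * 2 ^ (-(rightHalf I).1) := by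
  rw [rightHalf]
  push_cast
  rw [two_zpow_succ]
  have : (0:ℝ) < 2 ^ (-I.1) := by positivity
  nlinarith

lemma mid_le_hi (I : ℤ × ℤ) :
    (((rightHalf I).2 : ℝ)) * 2 ^ (-(rightHalf I).1) ≤ ((I.2 : ℝ) + 1) * 2 ^ (-I.1) := by
  rw [rightHalf]
  push_cast
  rw [two_zpow_succ]
  have : (0:ℝ) < 2 ^ (-I.1) := by positivity
  nlinarith

lemma dyadic_union (I : ℤ × ℤ) :
    dyadicI (leftHalf I) ∪ dyadicI (rightHalf I) = dyadicI I := by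
  rw [dyadicI, dyadicI, dyadicI, left_lo, left_hi_right_lo, right_hi]
  exact Set.Ico_union_Ico_eq_Ico (lo_le_mid I) (mid_le_hi I)

lemma dyadic_disjoint (I : ℤ × ℤ) :
    Disjoint (dyadicI (leftHalf I)) (dyadicI (rightHalf I)) := by
  rw [dyadicI, dyadicI, left_hi_right_lo]
  exact Set.Ico_disjoint_Ico_same

lemma volume_dyadicI (I : ℤ × ℤ) : volume (dyadicI I) = ENNReal.ofReal (len I) := by
  rw [dyadicI, Real.volume_Ico]
  congr 1
  rw [len]
  ring

lemma dyadic_subset_le {I K : ℤ × ℤ} (h : dyadicI I ⊆ dyadicI K) : K.1 ≤ I.1 := by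
  have hlt : (I.2 : ℝ) * 2 ^ (-I.1) < ((I.2 : ℝ) + 1) * 2 ^ (-I.1) := by
    have : (0:ℝ) < 2 ^ (-I.1) := by positivity
    nlinarith
  rw [dyadicI, dyadicI, Set.Ico_subset_Ico_iff hlt] at h
  have hle : (2:ℝ) ^ (-I.1) ≤ 2 ^ (-K.1) := by nlinarith [h.1, h.2]
  have := (zpow_le_zpow_iff_right₀ (by norm_num : (1:ℝ) < 2)).1 hle
  omega

lemma dyadic_subset_half {I K : ℤ × ℤ} (h : dyadicI I ⊆ dyadicI K) (hne : I ≠ K) :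
    dyadicI I ⊆ dyadicI (leftHalf K) ∨ dyadicI I ⊆ dyadicI (rightHalf K) := by
  have hKI : K.1 ≤ I.1 := dyadic_subset_le h
  have hlt : (I.2 : ℝ) * 2 ^ (-I.1) < ((I.2 : ℝ) + 1) * 2 ^ (-I.1) := by
    have : (0:ℝ) < 2 ^ (-I.1) := by positivity
    nlinarith
  rw [dyadicI, dyadicI, Set.Ico_subset_Ico_iff hlt] at h
  obtain ⟨h1, h2⟩ := h
  have hKlt : K.1 < I.1 := by
    rcases lt_or_eq_of_le hKI with h' | h'
    · exact h'
    · exfalso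
      apply hne
      rw [← h'] at h1 h2
      have hpos : (0:ℝ) < 2 ^ (-K.1) := by positivity
      have e1 : (K.2 : ℝ) ≤ I.2 := le_of_mul_le_mul_right h1 hpos
      have e2 : (I.2 : ℝ) ≤ K.2 := by
        have := h2
        nlinarith
      have : (I.2 : ℝ) = K.2 := le_antisymm e2 e1
      have : I.2 = K.2 := by exact_mod_cast this
      exact Prod.ext h'.symm this
  -- the midpoint of K is an integer multiple of 2^{-I.1}
  set d : ℕ := (I.1 - K.1 - 1).toNat with hd
  set m : ℤ := (2*K.2+1) * 2^d with hmdef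
  have hdz : (d : ℤ) = I.1 - K.1 - 1 := Int.toNat_of_nonneg (by omega)
  have hm : (m : ℝ) * 2 ^ (-I.1) = ((rightHalf K).2 : ℝ) * 2 ^ (-(rightHalf K).1) := by
    rw [rightHalf, hmdef]
    push_cast
    rw [show ((2:ℝ)^(d:ℕ)) = (2:ℝ)^((d:ℤ)) from (zpow_natCast 2 d).symm, hdz]
    rw [show (-(K.1+1)) = (I.1 - K.1 - 1) + (-I.1) by ring, zpow_add₀ (by norm_num : (2:ℝ) ≠ 0)]
    ring
  have hpow : (0:ℝ) < 2 ^ (-I.1) := by positivity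
  rcases le_or_gt m I.2 with hcase | hcase
  · right
    rw [dyadicI, dyadicI, Set.Ico_subset_Ico_iff hlt]
    constructor
    · rw [← hm]
      have : (m:ℝ) ≤ I.2 := by exact_mod_cast hcase
      nlinarith
    · rw [right_hi]
      exact h2
  · left
    rw [dyadicI, dyadicI, Set.Ico_subset_Ico_iff hlt]
    constructor
    · rw [left_lo]
      exact h1
    · rw [left_hi_right_lo, ← hm]
      have : ((I.2:ℝ) + 1) ≤ m := by exact_mod_cast hcase
      nlinarith

-- ============ integration facts ============

lemma intOn {f : ℝ → ℝ} (hf : LocallyIntegrable f volume) (I : ℤ × ℤ) :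
    IntegrableOn f (dyadicI I) volume := by
  have h := hf.integrableOn_isCompact (isCompact_Icc
    (a := (I.2 : ℝ) * 2 ^ (-I.1)) (b := ((I.2 : ℝ) + 1) * 2 ^ (-I.1)))
  exact h.mono_set Set.Ico_subset_Icc_self

lemma integral_split {f : ℝ → ℝ} (hf : LocallyIntegrable f volume) (I : ℤ × ℤ) :
    ∫ x in dyadicI I, f x = (∫ x in dyadicI (leftHalf I), f x) + ∫ x in dyadicI (rightHalf I), f x := by
  rw [← dyadic_union I]
  exact setIntegral_union (dyadic_disjoint I) measurableSet_Ico (intOn hf _) (intOn hf _)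

lemma avg_half {f : ℝ → ℝ} (hf : LocallyIntegrable f volume) (I : ℤ × ℤ) :
    avg f I = (avg f (leftHalf I) + avg f (rightHalf I)) / 2 := by
  have hL := len_leftHalf I
  have hR := len_rightHalf I
  have h0 : len I ≠ 0 := (len_pos I).ne'
  have h0' : (0:ℝ) < len I := len_pos I
  rw [avg, avg, avg, integral_split hf I, hL, hR]
  field_simp

lemma avg_pos {w : ℝ → ℝ} (hw : ∀ x, 0 < w x) (hf : LocallyIntegrable w volume) (I : ℤ × ℤ) :
    0 < avg w I := by
  rw [avg]
  apply mul_pos (inv_pos.2 (len_pos I))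
  rw [setIntegral_pos_iff_support_of_nonneg_ae (ae_of_all _ (fun x => (hw x).le)) (intOn hf I)]
  have hsupp : Function.support w = Set.univ := by
    ext z; simp [Function.support, (hw z).ne']
  rw [hsupp, Set.univ_inter, volume_dyadicI]
  exact ENNReal.ofReal_pos.2 (len_pos I)

lemma amgm {a b : ℝ} (ha : 0 < a) (hb : 0 < b) : 2 ≤ a * b⁻¹ + b * a⁻¹ := by
  rw [← sub_nonneg]
  have h : a*b⁻¹ + b*a⁻¹ - 2 = (a-b)^2 * (a*b)⁻¹ := by
    field_simp
    ring
  rw [h]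
  exact mul_nonneg (sq_nonneg _) (inv_nonneg.2 (mul_pos ha hb).le)

lemma one_le_avg_mul {w : ℝ → ℝ} (hw : ∀ x, 0 < w x) (hf : LocallyIntegrable w volume)
    (hfi : LocallyIntegrable (fun x => (w x)⁻¹) volume) (I : ℤ × ℤ) :
    1 ≤ avg w I * avg (fun x => (w x)⁻¹) I := by
  rw [avg, avg]
  set μ := volume.restrict (dyadicI I) with hμ
  haveI : IsFiniteMeasure μ := by
    constructor
    rw [hμ, Measure.restrict_apply_univ, volume_dyadicI]
    exact ENNReal.ofReal_lt_top
  have hw1 : Integrable w μ := intOn hf I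
  have hw2 : Integrable (fun x => (w x)⁻¹) μ := intOn hfi I
  have hIntF : Integrable (fun z : ℝ × ℝ => w z.1 * (w z.2)⁻¹ + (w z.1)⁻¹ * w z.2) (μ.prod μ) :=
    (hw1.mul_prod hw2).add (hw2.mul_prod hw1)
  have hmono : ∫ _ : ℝ × ℝ, (2:ℝ) ∂(μ.prod μ)
      ≤ ∫ z : ℝ × ℝ, (w z.1 * (w z.2)⁻¹ + (w z.1)⁻¹ * w z.2) ∂(μ.prod μ) := by
    apply integral_mono (integrable_const 2) hIntF
    intro z
    have := amgm (hw z.1) (hw z.2)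
    simp only
    linarith
  have hconst : ∫ _ : ℝ × ℝ, (2:ℝ) ∂(μ.prod μ) = 2 * (len I)^2 := by
    rw [integral_const]
    have : (μ.prod μ) Set.univ = ENNReal.ofReal (len I) * ENNReal.ofReal (len I) := by
      rw [← Set.univ_prod_univ, Measure.prod_prod, hμ, Measure.restrict_apply_univ, volume_dyadicI]
    rw [measureReal_def, this, smul_eq_mul]
    rw [ENNReal.toReal_mul, ENNReal.toReal_ofReal (len_pos I).le]
    ring
  have hprod : ∫ z : ℝ × ℝ, (w z.1 * (w z.2)⁻¹ + (w z.1)⁻¹ * w z.2) ∂(μ.prod μ)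
      = 2 * ((∫ x, w x ∂μ) * (∫ x, (w x)⁻¹ ∂μ)) := by
    rw [integral_add (hw1.mul_prod hw2) (hw2.mul_prod hw1)]
    rw [integral_prod_mul w (fun x => (w x)⁻¹), integral_prod_mul (fun x => (w x)⁻¹) w]
    ring
  have hkey : (len I)^2 ≤ (∫ x, w x ∂μ) * (∫ x, (w x)⁻¹ ∂μ) := by
    rw [hconst, hprod] at hmono
    linarith
  have h0 : (0:ℝ) < len I := len_pos I
  rw [show (len I)⁻¹ * (∫ x, w x ∂μ) * ((len I)⁻¹ * ∫ x, (w x)⁻¹ ∂μ)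
      = ((∫ x, w x ∂μ) * (∫ x, (w x)⁻¹ ∂μ))/(len I)^2 by
    rw [eq_div_iff (by positivity : ((len I)^2 : ℝ) ≠ 0)]
    have hc : (len I)^2 * ((len I)⁻¹)^2 = 1 := by
      rw [← mul_pow, mul_inv_cancel₀ (len_pos I).ne']
      norm_num
    linear_combination ((∫ x, w x ∂μ) * (∫ x, (w x)⁻¹ ∂μ)) * hc]
  rw [le_div_iff₀ (by positivity)]
  linarith

-- ============ telescoping ============

lemma tele (F D : (ℤ × ℤ) → ℝ) (hF : ∀ I, 0 ≤ F I) (hD : ∀ I, 0 ≤ D I)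
    (hrec : ∀ I, len I * F I = len I * D I + len (leftHalf I) * F (leftHalf I)
      + len (rightHalf I) * F (rightHalf I)) :
    ∀ (N : ℕ) (K : ℤ × ℤ) (T : Finset (ℤ × ℤ)), (∀ I ∈ T, dyadicI I ⊆ dyadicI K) →
      (∀ I ∈ T, I.1 < K.1 + N) → ∑ I ∈ T, len I * D I ≤ len K * F K := by
  intro N
  induction N with
  | zero =>
    intro K T hsub hdep
    have hT : ∀ I ∈ T, False := by
      intro I hI
      have := dyadic_subset_le (hsub I hI)
      have := hdep I hI
      omega
    rw [Finset.sum_eq_zero (fun I hI => absurd hI (fun h => hT I h))]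
    exact mul_nonneg (len_pos K).le (hF K)
  | succ N ih =>
    intro K T hsub hdep
    classical
    set T' := T.erase K with hT'
    have hsub' : ∀ I ∈ T', dyadicI I ⊆ dyadicI K := fun I hI => hsub I (Finset.mem_of_mem_erase hI)
    have hhalf : ∀ I ∈ T', dyadicI I ⊆ dyadicI (leftHalf K) ∨ dyadicI I ⊆ dyadicI (rightHalf K) :=
      fun I hI => dyadic_subset_half (hsub' I hI) (Finset.ne_of_mem_erase hI)
    have hdep' : ∀ I ∈ T', I.1 < K.1 + 1 + N := by
      intro I hI
      have := hdep I (Finset.mem_of_mem_erase hI)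
      push_cast at this ⊢
      omega
    set TL := T'.filter (fun I => dyadicI I ⊆ dyadicI (leftHalf K)) with hTL
    set TR := T'.filter (fun I => ¬ dyadicI I ⊆ dyadicI (leftHalf K)) with hTR
    have hL : ∑ I ∈ TL, len I * D I ≤ len (leftHalf K) * F (leftHalf K) := by
      apply ih (leftHalf K) TL
      · intro I hI
        exact (Finset.mem_filter.1 hI).2
      · intro I hI
        have := hdep' I (Finset.mem_filter.1 hI).1
        rw [leftHalf]
        exact this
    have hR : ∑ I ∈ TR, len I * D I ≤ len (rightHalf K) * F (rightHalf K) := by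
      apply ih (rightHalf K) TR
      · intro I hI
        obtain ⟨hI', hnot⟩ := Finset.mem_filter.1 hI
        rcases hhalf I hI' with h | h
        · exact absurd h hnot
        · exact h
      · intro I hI
        have := hdep' I (Finset.mem_filter.1 hI).1
        rw [rightHalf]
        exact this
    have hsplit : ∑ I ∈ T', len I * D I = ∑ I ∈ TL, len I * D I + ∑ I ∈ TR, len I * D I :=
      (Finset.sum_filter_add_sum_filter_not T' _ _).symm
    have hbound : ∑ I ∈ T, len I * D I ≤ len K * D K + ∑ I ∈ T', len I * D I := by
      by_cases hK : K ∈ T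
      · rw [← Finset.add_sum_erase T _ hK]
      · rw [hT', Finset.erase_eq_of_notMem hK]
        have : 0 ≤ len K * D K := mul_nonneg (len_pos K).le (hD K)
        linarith
    calc ∑ I ∈ T, len I * D I ≤ len K * D K + (∑ I ∈ TL, len I * D I + ∑ I ∈ TR, len I * D I) := by
          rw [← hsplit]; exact hbound
      _ ≤ len K * D K + (len (leftHalf K) * F (leftHalf K) + len (rightHalf K) * F (rightHalf K)) := by
          linarith
      _ = len K * F K := by rw [hrec K]; ring


end WittwerAux

open WittwerAux in
/-- Wittwer's sharp square-function bound: for `w ∈ A₂^d`,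
`(1/|J|) Σ_{I∈D(J)} ((m_{I⁻}w − m_{I⁺}w)/(2 m_I w))² |I| m_I w ≤ C ‖w‖_{A₂^d} m_J w`. -/
theorem wittwer_square_function
    : ∃ C : ℝ, 0 < C ∧ ∀ (w : ℝ → ℝ), (∀ x, 0 < w x) →
      LocallyIntegrable w volume →
      LocallyIntegrable (fun x => (w x)⁻¹) volume →
      BddAbove (Set.range fun I : ℤ × ℤ => avg w I * avg (fun x => (w x)⁻¹) I) →
      ∀ (J : ℤ × ℤ) (S : Finset (ℤ × ℤ)), (∀ I ∈ S, dyadicI I ⊆ dyadicI J) →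
        (len J)⁻¹ * ∑ I ∈ S,
            ((avg w (rightHalf I) - avg w (leftHalf I)) / (2 * avg w I)) ^ 2 * len I * avg w I
          ≤ C * A2const w * avg w J := by
  refine ⟨160, by norm_num, ?_⟩
  intro w hwpos hw hwi hbdd J S hS
  classical
  set Q := A2const w with hQdef
  have hQle : ∀ I : ℤ × ℤ, avg w I * avg (fun x => (w x)⁻¹) I ≤ Q := by
    intro I
    rw [hQdef, A2const]
    exact le_ciSup hbdd I
  have hCS : ∀ I, 1 ≤ avg w I * avg (fun x => (w x)⁻¹) I :=
    fun I => one_le_avg_mul hwpos hw hwi I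
  have hQ1 : (1:ℝ) ≤ Q := le_trans (hCS J) (hQle J)
  have hQ0 : (0:ℝ) < Q := by linarith
  have hu : ∀ I, 0 < avg w I := avg_pos hwpos hw
  have hv : ∀ I, 0 < avg (fun x => (w x)⁻¹) I :=
    avg_pos (fun x => inv_pos.2 (hwpos x)) hwi
  set F : (ℤ × ℤ) → ℝ := fun I => bell Q (avg w I) (avg (fun x => (w x)⁻¹) I) with hF
  set D : (ℤ × ℤ) → ℝ := fun I => F I - F (leftHalf I)/2 - F (rightHalf I)/2 with hD
  have hFpos : ∀ I, 0 ≤ F I := fun I => bell_nonneg hQ1 (hu I) (hv I) (hCS I)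
  have hdrop : ∀ I, ((avg w (rightHalf I) - avg w (leftHalf I))/2)^2 / (32*Q*avg w I) ≤ D I := by
    intro I
    have hau := avg_half hw I
    have hav := avg_half hwi I
    set xx := (avg w (rightHalf I) - avg w (leftHalf I))/2 with hx
    set yy := (avg (fun x => (w x)⁻¹) (rightHalf I) - avg (fun x => (w x)⁻¹) (leftHalf I))/2 with hy
    have e1 : avg w I - xx = avg w (leftHalf I) := by rw [hau]; ring
    have e2 : avg w I + xx = avg w (rightHalf I) := by rw [hau]; ring
    have e3 : avg (fun x => (w x)⁻¹) I - yy = avg (fun x => (w x)⁻¹) (leftHalf I) := by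
      rw [hav]; ring
    have e4 : avg (fun x => (w x)⁻¹) I + yy = avg (fun x => (w x)⁻¹) (rightHalf I) := by
      rw [hav]; ring
    have H := bell_midpoint Q (avg w I) (avg (fun x => (w x)⁻¹) I) xx yy hQ1
      (by rw [e1]; exact hu _) (by rw [e2]; exact hu _)
      (by rw [e3]; exact hv _) (by rw [e4]; exact hv _) (hQle I)
    rw [e1, e2, e3, e4] at H
    simp only [hD, hF]
    have hconv : xx^2/(32*Q*avg w I) = xx^2 * (32*Q*avg w I)⁻¹ := by rw [div_eq_mul_inv]
    linarith [H]
  have hD0 : ∀ I, 0 ≤ D I := by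
    intro I
    refine le_trans ?_ (hdrop I)
    have := hu I
    positivity
  have hrec : ∀ I, len I * F I = len I * D I + len (leftHalf I) * F (leftHalf I)
      + len (rightHalf I) * F (rightHalf I) := by
    intro I
    simp only [hD]
    rw [len_leftHalf, len_rightHalf]
    ring
  set N := S.sup (fun I => (I.1 - J.1 + 1).toNat) with hN
  have hdep : ∀ I ∈ S, I.1 < J.1 + N := by
    intro I hI
    have h1 : (I.1 - J.1 + 1).toNat ≤ N := Finset.le_sup (f := fun I => (I.1 - J.1 + 1).toNat) hI
    have h3 : I.1 - J.1 + 1 ≤ (N:ℤ) := Int.toNat_le.1 h1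
    omega
  have htele := tele F D hFpos hD0 hrec N J S hS hdep
  have hterm : ∀ I ∈ S, ((avg w (rightHalf I) - avg w (leftHalf I)) / (2 * avg w I))^2 * len I * avg w I
      ≤ (32*Q) * (len I * D I) := by
    intro I hI
    have h1 := hdrop I
    have hu' := hu I
    have hlen := len_pos I
    have eL : ((avg w (rightHalf I) - avg w (leftHalf I)) / (2 * avg w I))^2 * len I * avg w I
        = (32*Q) * (len I * (((avg w (rightHalf I) - avg w (leftHalf I))/2)^2 / (32*Q*avg w I))) := by
      field_simp
    rw [eL]
    have h2 : len I * (((avg w (rightHalf I) - avg w (leftHalf I))/2)^2 / (32*Q*avg w I))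
        ≤ len I * D I := mul_le_mul_of_nonneg_left h1 hlen.le
    apply mul_le_mul_of_nonneg_left h2 (by positivity)
  have hsum : ∑ I ∈ S, ((avg w (rightHalf I) - avg w (leftHalf I)) / (2 * avg w I))^2 * len I * avg w I
      ≤ (32*Q) * (len J * F J) := by
    calc ∑ I ∈ S, ((avg w (rightHalf I) - avg w (leftHalf I)) / (2 * avg w I))^2 * len I * avg w I
        ≤ ∑ I ∈ S, (32*Q) * (len I * D I) := Finset.sum_le_sum hterm
      _ = (32*Q) * ∑ I ∈ S, len I * D I := by rw [Finset.mul_sum]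
      _ ≤ (32*Q) * (len J * F J) := mul_le_mul_of_nonneg_left htele (by positivity)
  have hFJ : F J ≤ 5 * avg w J := by
    have := bell_le hQ1 (hu J) (hv J) (hCS J)
    simp only [hF]
    linarith
  have hlenJ : (0:ℝ) < len J := len_pos J
  calc (len J)⁻¹ * ∑ I ∈ S,
        ((avg w (rightHalf I) - avg w (leftHalf I)) / (2 * avg w I))^2 * len I * avg w I
      ≤ (len J)⁻¹ * ((32*Q) * (len J * F J)) :=
        mul_le_mul_of_nonneg_left hsum (inv_nonneg.2 hlenJ.le)
    _ = (32*Q) * F J := by field_simp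
    _ ≤ (32*Q) * (5 * avg w J) := mul_le_mul_of_nonneg_left hFJ (by positivity)
    _ = 160 * Q * avg w J := by ring
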